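/- For a finite bipartite simple graph G on n vertices, the Estrada–Rodríguez-Velázquez bipartivity index β(G) = (Σⱼ cosh λⱼ)/(Σⱼ e^{λⱼ}) equals 1, where λ₁,…,λₙ are the adjacency eigenvalues; equivalently Tr(cosh A) = Tr(e^{A}). -/

import Mathlib

open Matrix

/-- For a finite bipartite simple graph the Estrada–Rodríguez-Velázquez
bipartivity index `β(G) = Tr(cosh A) / Tr(e^A)` equals `1`; equivalently
`Tr(cosh A) = Tr(e^A)`, where `cosh A = (e^A + e^{-A})/2`. -/
theorem estrada_rodriguez_velazquez_bipartivity {V : Type*} [Fintype V] [DecidableEq V]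
    (G : SimpleGraph V) [DecidableRel G.Adj] (hbip : G.Colorable 2) :
    ((NormedSpace.exp (G.adjMatrix ℝ)).trace +
        (NormedSpace.exp (-(G.adjMatrix ℝ))).trace) / 2 =
      (NormedSpace.exp (G.adjMatrix ℝ)).trace := by
  obtain ⟨c⟩ := hbip
  set d : V → ℝ := fun v => if c v = 0 then 1 else -1 with hd
  set D : Matrix V V ℝ := Matrix.diagonal d with hD
  have hd2 : ∀ v, d v * d v = 1 := by
    intro v; by_cases h : c v = 0 <;> simp [hd, h]
  have hDD : D * D = 1 := by
    rw [hD, Matrix.diagonal_mul_diagonal]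
    ext i j
    by_cases h : i = j <;> simp [h, hd2, Matrix.diagonal, Matrix.one_apply]
  have hU : IsUnit D := ⟨⟨D, D, hDD, hDD⟩, rfl⟩
  have hDinv : D⁻¹ = D := by
    rw [Matrix.inv_eq_right_inv hDD]
  have hconj : D * G.adjMatrix ℝ * D⁻¹ = -(G.adjMatrix ℝ) := by
    rw [hDinv]
    ext i j
    simp only [hD, Matrix.mul_apply, Matrix.diagonal_apply, Matrix.neg_apply]
    rw [Finset.sum_eq_single j]
    · rw [Finset.sum_eq_single i]
      · simp only [if_pos rfl]
        by_cases hadj : G.Adj i j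
        · have hne : c i ≠ c j := c.valid hadj
          have : d i * d j = -1 := by
            by_cases hi : c i = 0
            · have hj : c j ≠ 0 := fun h => hne (by rw [hi, h])
              simp [hd, hi, hj]
            · have hj : c j = 0 := by omega
              simp [hd, hi, hj]
          simp [SimpleGraph.adjMatrix_apply, hadj]
          linear_combination this
        · simp [SimpleGraph.adjMatrix_apply, hadj]
      · intro b _ hb; simp [Ne.symm hb]
      · intro h; exact absurd (Finset.mem_univ i) h
    · intro b _ hb; simp [if_neg hb]
    · intro h; exact absurd (Finset.mem_univ j) h
  have hexp : NormedSpace.exp (-(G.adjMatrix ℝ)) =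
      D * NormedSpace.exp (G.adjMatrix ℝ) * D⁻¹ := by
    rw [← hconj, Matrix.exp_conj D (G.adjMatrix ℝ) hU]
  have htr : (NormedSpace.exp (-(G.adjMatrix ℝ))).trace =
      (NormedSpace.exp (G.adjMatrix ℝ)).trace := by
    rw [hexp, Matrix.trace_mul_cycle, hDinv, hDD, Matrix.one_mul]
  rw [htr]; ring
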